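/- In the twisted Laurent series ring over R with automorphism T, if F = f_m T^m + (lower order terms) with m ≥ 1 and f_m invertible (or, in the field setting, f_m ≠ 0), and D is a derivation commuting with T, then the leading coefficient h of any series H = h T^m + (lower order terms) satisfying D(H) = [F,H] up to order T^{2m} must satisfy f_m · T^m(h) = T^m(f_m) · h. -/
import Mathlib


/-- Twisted multiplication of (finitely supported) Laurent polynomials in the
shift operator `T`: `(aT^i)·(bT^j) = a·T^i(b)·T^{i+j}`, extended bilinearly. -/
noncomputable def tmul {R : Type*} [CommRing R] (T : R ≃+* R) (A B : ℤ →₀ R) : ℤ →₀ R :=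
  A.sum fun i a => B.sum fun j b => Finsupp.single (i + j) (a * (T ^ i) b)

lemma tmul_apply_top {R : Type*} [CommRing R] (T : R ≃+* R) (A B : ℤ →₀ R)
    (m : ℤ) (hA : ∀ j : ℤ, m < j → A j = 0) (hB : ∀ j : ℤ, m < j → B j = 0) :
    tmul T A B (2 * m) = A m * (T ^ m) (B m) := by
  unfold tmul
  rw [Finsupp.sum_apply]
  rw [Finsupp.sum_eq_single (a := m)]
  · rw [Finsupp.sum_apply]
    rw [Finsupp.sum_eq_single (a := m)]
    · rw [Finsupp.single_apply, if_pos (by ring)]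
    · intro j hj hjm
      rw [Finsupp.single_apply, if_neg, ]
      have : j ≤ m := by
        by_contra h
        exact hj (hB j (by omega))
      omega
    · simp
  · intro i hi him
    have hi' : i ≤ m := by
      by_contra h
      exact hi (hA i (by omega))
    rw [Finsupp.sum_apply, Finsupp.sum]
    apply Finset.sum_eq_zero
    intro j hj
    rw [Finsupp.mem_support_iff] at hj
    have hj' : j ≤ m := by
      by_contra h
      exact hj (hB j (by omega))
    rw [Finsupp.single_apply, if_neg (by omega)]
  · simp

/-- if `F = f_m T^m + (lower)` with `m ≥ 1` and `f_m` invertible,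
`D` is a derivation commuting with `T`, and `H = h T^m + (lower)` satisfies
`D(H) = [F,H]` up to order `T^{2m}` (i.e. the `T^{2m}` coefficients agree),
then the leading coefficient satisfies `f_m · T^m(h) = T^m(f_m) · h`. -/
theorem leading_coefficient_equation
    {R : Type*} [CommRing R] (T : R ≃+* R) (D : R →+ R)
    (hLeib : ∀ x y : R, D (x * y) = D x * y + x * D y)
    (hDT : ∀ x : R, D (T x) = T (D x))
    (m : ℤ) (hm : 1 ≤ m)
    (F H : ℤ →₀ R)
    (hFdeg : ∀ j : ℤ, m < j → F j = 0)
    (hHdeg : ∀ j : ℤ, m < j → H j = 0)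
    (hfm : IsUnit (F m))
    (hlax : D (H (2 * m)) = (tmul T F H - tmul T H F) (2 * m)) :
    F m * (T ^ m) (H m) = (T ^ m) (F m) * H m := by
  have h2m : H (2 * m) = 0 := hHdeg _ (by omega)
  rw [h2m, map_zero, Finsupp.sub_apply, tmul_apply_top T F H m hFdeg hHdeg,
    tmul_apply_top T H F m hHdeg hFdeg] at hlax
  have := sub_eq_zero.mp hlax.symm
  linear_combination this
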